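/- If s ∈ S(t), then the new shortest-path distance from s to t is realized through the updated edge: d'(s,t) = d(s,u) + ω'(u,v) + d(v,t). In particular d(s,u) < ∞ and d(v,t) < ∞. -/

import Mathlib

open scoped BigOperators

/-- A directed graph on vertex set `V` with positive real edge weights. -/
structure WDigraph (V : Type*) where
  /-- the edge relation -/
  E : V → V → Prop
  /-- the edge weights -/
  w : V → V → ℝ
  /-- weights of edges are positive -/
  pos : ∀ a b, E a b → 0 < w a b

namespace WDigraph

variable {V : Type*} [Fintype V] [DecidableEq V]

/-- `p` is a simple path from `s` to `t` in `G`: a nonempty list of pairwise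
distinct vertices starting at `s`, ending at `t`, consecutive vertices joined
by edges. (Since all weights are positive, every shortest path is simple, so
it suffices to consider simple paths throughout.) -/
def IsPath (G : WDigraph V) (s t : V) (p : List V) : Prop :=
  List.Chain' G.E p ∧ p.head? = some s ∧ p.getLast? = some t ∧ p.Nodup

/-- The total weight of a list of vertices (sum of the weights of consecutive pairs). -/
def pw (G : WDigraph V) : List V → ℝ
  | [] => 0
  | [_] => 0
  | a :: b :: r => G.w a b + G.pw (b :: r)

/-- `d(s,t)`: shortest-path distance from `s` to `t`, equal to `⊤` (infinity)
if `t` is unreachable from `s`. -/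
noncomputable def dist (G : WDigraph V) (s t : V) : EReal :=
  sInf ((fun p => (G.pw p : EReal)) '' {p | G.IsPath s t p})

/-- The set of shortest `s`-`t` paths in `G`. -/
def SP (G : WDigraph V) (s t : V) : Set (List V) :=
  {p | G.IsPath s t p ∧ (G.pw p : EReal) = G.dist s t}

/-- `σ_{st}`: the number of shortest `s`-`t` paths in `G`. -/
noncomputable def sigma (G : WDigraph V) (s t : V) : ℕ :=
  (G.SP s t).ncard

/-- `σ_{st}(v)`: the number of shortest `s`-`t` paths in `G` that contain `v`. -/
noncomputable def sigmaV (G : WDigraph V) (s t v : V) : ℕ :=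
  {p ∈ G.SP s t | v ∈ p}.ncard

/-- `σ_{st}(v,w)`: the number of shortest `s`-`t` paths in `G` using the edge `(v,w)`. -/
noncomputable def sigmaE (G : WDigraph V) (s t v w : V) : ℕ :=
  {p ∈ G.SP s t | [v, w] <:+: p}.ncard

/-- `P_s(t)`: the set of predecessors of `t` with respect to source `s`:
nodes `y` with `(y,t) ∈ E` and `d(s,y) + ω(y,t) = d(s,t) < ∞`. -/
def pred (G : WDigraph V) (s t : V) : Set V :=
  {y | G.E y t ∧ G.dist s y + (G.w y t : EReal) = G.dist s t ∧ G.dist s t < ⊤}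

/-- `δ_{s•}(v)`: Brandes's one-sided dependency of `s` on `v`
(a summand is `0` whenever its denominator is `0`, which is automatic since
in Lean division by zero yields zero). -/
noncomputable def delta (G : WDigraph V) (s v : V) : ℝ :=
  ∑ᶠ t ∈ {t : V | t ≠ s ∧ t ≠ v}, (G.sigmaV s t v : ℝ) / (G.sigma s t : ℝ)

/-- `c_B(v)`: the betweenness centrality of `v`. -/
noncomputable def bc (G : WDigraph V) (v : V) : ℝ :=
  ∑ᶠ s ∈ {s : V | s ≠ v}, G.delta s v

/-- `G'` is obtained from `G` by the incremental update `(u, v, ω'(u,v))`: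
either a new edge `(u,v) ∉ E` is inserted with positive weight, or the weight
of the existing edge `(u,v)` is decreased; all other edges and weights are
unchanged. (Positivity of all weights is part of the `WDigraph` structure.) -/
structure IsUpdate (G G' : WDigraph V) (u v : V) : Prop where
  /-- the updated edge is present in `G'` -/
  edge' : G'.E u v
  /-- `E' = E ∪ {(u,v)}` -/
  edge_iff : ∀ a b, G'.E a b ↔ G.E a b ∨ a = u ∧ b = v
  /-- `ω'` agrees with `ω` on all edges other than `(u,v)` -/
  weight_eq : ∀ a b, ¬(a = u ∧ b = v) → G'.w a b = G.w a b
  /-- either an insertion of a new edge, or a weight decrease of an existing one -/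
  insert_or_decrease : ¬ G.E u v ∨ (G.E u v ∧ G'.w u v < G.w u v)

/-- `S(t)`: the affected sources of `t`. -/
def affS (G G' : WDigraph V) (t : V) : Set V :=
  {s | G.dist s t > G'.dist s t ∨ G.sigma s t ≠ G'.sigma s t}

/-- `T(s)`: the affected targets of `s`. -/
def affT (G G' : WDigraph V) (s : V) : Set V :=
  {t | G.dist s t > G'.dist s t ∨ G.sigma s t ≠ G'.sigma s t}

/-- `Δ_{s•}(v) = Σ_{t ∈ T(s), t ≠ v} σ_{st}(v)/σ_{st}`, computed in `G`
(`0`-convention for zero denominators). -/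
noncomputable def Delta (G G' : WDigraph V) (s v : V) : ℝ :=
  ∑ᶠ t ∈ {t : V | t ∈ affT G G' s ∧ t ≠ v}, (G.sigmaV s t v : ℝ) / (G.sigma s t : ℝ)

/-- `Δ'_{s•}(v) = Σ_{t ∈ T(s), t ≠ v} σ'_{st}(v)/σ'_{st}`, computed in `G'`
(`0`-convention for zero denominators). -/
noncomputable def Delta' (G G' : WDigraph V) (s v : V) : ℝ :=
  ∑ᶠ t ∈ {t : V | t ∈ affT G G' s ∧ t ≠ v}, (G'.sigmaV s t v : ℝ) / (G'.sigma s t : ℝ)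


/-! ### Auxiliary lemmas -/

section Aux

variable {G G' : WDigraph V} {u v : V}

lemma pw_append_cons (G : WDigraph V) (x : V) (b : List V) :
    ∀ a : List V, G.pw (a ++ x :: b) = G.pw (a ++ [x]) + G.pw (x :: b)
  | [] => by simp [pw]
  | [y] => by simp [pw, add_assoc]
  | y :: z :: a => by
    have ih := pw_append_cons G x b (z :: a)
    simp only [List.cons_append, List.append_eq, pw] at ih ⊢
    rw [ih]; ring

lemma pw_nonneg (G : WDigraph V) : ∀ l : List V, List.Chain' G.E l → 0 ≤ G.pw l
  | [], _ => le_refl _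
  | [_], _ => le_refl _
  | a :: b :: r, hc => by
    simp only [List.Chain'] at hc; rw [List.isChain_cons_cons] at hc
    have h1 := pw_nonneg G (b :: r) hc.2
    have h2 := G.pos a b hc.1
    simp only [pw]; linarith

lemma isPath_finite (G : WDigraph V) (s t : V) : {p | G.IsPath s t p}.Finite := by
  apply (List.finite_length_le V (Fintype.card V)).subset
  intro p hp
  exact hp.2.2.2.length_le_card

lemma dist_le_pw {s t : V} {p : List V} (hp : G.IsPath s t p) :
    G.dist s t ≤ (G.pw p : EReal) :=
  sInf_le ⟨p, hp, rfl⟩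

lemma exists_sp {s t : V} (hne : ∃ p, G.IsPath s t p) :
    ∃ p, G.IsPath s t p ∧ (G.pw p : EReal) = G.dist s t := by
  have hfin : ((fun p => (G.pw p : EReal)) '' {p | G.IsPath s t p}).Finite :=
    (isPath_finite G s t).image _
  have hne' : ((fun p => (G.pw p : EReal)) '' {p | G.IsPath s t p}).Nonempty := by
    obtain ⟨p, hp⟩ := hne
    exact ⟨_, ⟨p, hp, rfl⟩⟩
  obtain ⟨p, hp, hpw⟩ := hne'.csInf_mem hfin
  exact ⟨p, hp, hpw⟩

lemma dist_eq_top {s t : V} (h : ¬ ∃ p, G.IsPath s t p) : G.dist s t = ⊤ := by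
  have he : {p | G.IsPath s t p} = ∅ := by
    rw [Set.eq_empty_iff_forall_notMem]
    intro p hp; exact h ⟨p, hp⟩
  unfold dist
  rw [he, Set.image_empty, sInf_empty]

lemma IsUpdate.chain_mono (h : IsUpdate G G' u v) {l : List V}
    (hl : List.Chain' G.E l) : List.Chain' G'.E l :=
  hl.imp fun a b hab => (h.edge_iff a b).2 (Or.inl hab)

lemma isPath_mono (h : IsUpdate G G' u v) {s t : V} {p : List V}
    (hp : G.IsPath s t p) : G'.IsPath s t p :=
  ⟨h.chain_mono hp.1, hp.2.1, hp.2.2.1, hp.2.2.2⟩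

lemma IsUpdate.pw_le (h : IsUpdate G G' u v) :
    ∀ l : List V, List.Chain' G.E l → G'.pw l ≤ G.pw l
  | [], _ => le_refl _
  | [_], _ => le_refl _
  | a :: b :: r, hc => by
    simp only [List.Chain'] at hc; rw [List.isChain_cons_cons] at hc
    have ih := IsUpdate.pw_le h (b :: r) hc.2
    have hw : G'.w a b ≤ G.w a b := by
      by_cases hab : a = u ∧ b = v
      · obtain ⟨rfl, rfl⟩ := hab
        rcases h.insert_or_decrease with h1 | h1
        · exact absurd hc.1 h1
        · exact le_of_lt h1.2
      · exact le_of_eq (h.weight_eq a b hab)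
    simp only [pw]; linarith

lemma IsUpdate.pw_eq (h : IsUpdate G G' u v) :
    ∀ l : List V, ¬ ([u, v] <:+: l) → G'.pw l = G.pw l
  | [], _ => rfl
  | [_], _ => rfl
  | a :: b :: r, hinf => by
    have hab : ¬ (a = u ∧ b = v) := by
      rintro ⟨rfl, rfl⟩
      exact hinf ⟨[], r, rfl⟩
    have ih := IsUpdate.pw_eq h (b :: r) (fun hi => hinf (List.infix_cons hi))
    simp only [pw, ih, h.weight_eq a b hab]

lemma IsUpdate.chain_down (h : IsUpdate G G' u v) :
    ∀ l : List V, ¬ ([u, v] <:+: l) → List.Chain' G'.E l → List.Chain' G.E l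
  | [], _, _ => List.isChain_nil
  | [x], _, _ => List.isChain_singleton x
  | a :: b :: r, hinf, hc => by
    simp only [List.Chain'] at hc ⊢; rw [List.isChain_cons_cons] at hc ⊢
    have hab : ¬ (a = u ∧ b = v) := by
      rintro ⟨rfl, rfl⟩
      exact hinf ⟨[], r, rfl⟩
    refine ⟨?_, IsUpdate.chain_down h (b :: r) (fun hi => hinf (List.infix_cons hi)) hc.2⟩
    rcases (h.edge_iff a b).1 hc.1 with h1 | h1
    · exact h1
    · exact absurd h1 hab

lemma not_infix_of_getLast {l : List V} (hnd : l.Nodup) (hl : l.getLast? = some u) :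
    ¬ ([u, v] <:+: l) := by
  rintro ⟨a, b, rfl⟩
  have h1 : (a ++ [u, v] ++ b).getLast? = (v :: b).getLast? := by
    rw [List.append_assoc]
    show (a ++ (u :: v :: b)).getLast? = _
    rw [List.getLast?_append_cons, List.getLast?_cons_cons]
  rw [h1] at hl
  have hmem : u ∈ v :: b := by
    obtain ⟨hne, he⟩ := List.mem_getLast?_eq_getLast (x := u) (l := v :: b)
      (by rw [hl]; rfl)
    rw [he]; exact List.getLast_mem hne
  have hsub : (u :: v :: b).Nodup := by
    refine List.Nodup.sublist ?_ hnd
    rw [List.append_assoc]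
    exact List.sublist_append_right a (u :: v :: b)
  rw [List.nodup_cons] at hsub
  exact hsub.1 hmem

lemma not_infix_of_head {l : List V} (hnd : l.Nodup) (hl : l.head? = some v) :
    ¬ ([u, v] <:+: l) := by
  rintro ⟨a, b, rfl⟩
  rcases a with _ | ⟨y, a⟩
  · simp only [List.nil_append, List.cons_append, List.head?_cons,
      Option.some.injEq] at hl
    rw [← hl] at hnd
    simp at hnd
  · simp only [List.cons_append, List.head?_cons, Option.some.injEq] at hl
    subst hl
    have hnd' : ((y :: a) ++ ([u, y] ++ b)).Nodup := by
      rw [← List.append_assoc]; exact hnd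
    rw [List.nodup_append] at hnd'
    exact hnd'.2.2 y List.mem_cons_self y (by simp) rfl

lemma exists_dup_split : ∀ {l : List V}, ¬ l.Nodup →
    ∃ (a : List V) (x : V) (b c : List V), l = a ++ x :: b ++ x :: c := by
  intro l
  induction l with
  | nil => intro hl; exact absurd List.nodup_nil hl
  | cons y l ih =>
    intro hl
    rw [List.nodup_cons] at hl
    by_cases hy : y ∈ l
    · obtain ⟨b, c, rfl⟩ := List.append_of_mem hy
      exact ⟨[], y, b, c, rfl⟩
    · have hnd : ¬ l.Nodup := fun hh => hl ⟨hy, hh⟩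
      obtain ⟨a, x, b, c, rfl⟩ := ih hnd
      exact ⟨y :: a, x, b, c, rfl⟩

lemma exists_isPath_le (G : WDigraph V) :
    ∀ (n : ℕ) (p : List V), p.length ≤ n → List.Chain' G.E p →
      ∀ {s t : V}, p.head? = some s → p.getLast? = some t →
      ∃ q, G.IsPath s t q ∧ G.pw q ≤ G.pw p := by
  intro n
  induction n with
  | zero =>
    intro p hp _ s t hh _
    rw [Nat.le_zero, List.length_eq_zero_iff] at hp
    subst hp; exact absurd hh (by simp)
  | succ n ih =>
    intro p hp hc s t hh hl
    by_cases hnd : p.Nodup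
    · exact ⟨p, ⟨hc, hh, hl, hnd⟩, le_refl _⟩
    obtain ⟨a, x, b, c, rfl⟩ := exists_dup_split hnd
    obtain ⟨hab, hxc, hbd⟩ := List.isChain_append.mp hc
    obtain ⟨ha, hxb, hbd0⟩ := List.isChain_append.mp hab
    have hc' : List.Chain' G.E (a ++ x :: c) := by
      simp only [List.Chain']; rw [List.isChain_append]
      refine ⟨ha, hxc, fun y hy z hz => ?_⟩
      simp only [List.head?_cons, Option.mem_def, Option.some.injEq] at hz
      subst hz
      exact hbd0 y hy x (by simp)
    have hh' : (a ++ x :: c).head? = some s := by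
      rcases a with _ | ⟨y, a⟩
      · simpa using hh
      · simpa using hh
    have hl0 : (x :: c).getLast? = some t := by
      rw [List.getLast?_append_cons] at hl; exact hl
    have hl' : (a ++ x :: c).getLast? = some t := by
      rw [List.getLast?_append_cons]; exact hl0
    have hlen : (a ++ x :: c).length ≤ n := by
      simp only [List.length_append, List.length_cons] at hp ⊢
      omega
    have hchainmid : List.Chain' G.E (x :: (b ++ [x])) := by
      rw [← List.cons_append]; simp only [List.Chain']; rw [List.isChain_append]
      refine ⟨hxb, List.isChain_singleton x, fun y hy z hz => ?_⟩
      simp only [List.head?_cons, Option.mem_def, Option.some.injEq] at hz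
      subst hz
      exact hbd y (List.mem_getLast?_append_of_mem_getLast? hy) x (by simp)
    have hple : G.pw (a ++ x :: c) ≤ G.pw ((a ++ x :: b) ++ x :: c) := by
      have e1 : G.pw ((a ++ x :: b) ++ x :: c) =
          G.pw ((a ++ x :: b) ++ [x]) + G.pw (x :: c) := pw_append_cons G x c _
      have e15 : (a ++ x :: b) ++ [x] = a ++ x :: (b ++ [x]) := by simp
      have e2 : G.pw (a ++ x :: (b ++ [x])) =
          G.pw (a ++ [x]) + G.pw (x :: (b ++ [x])) := pw_append_cons G x (b ++ [x]) a
      have e3 : G.pw (a ++ x :: c) = G.pw (a ++ [x]) + G.pw (x :: c) :=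
        pw_append_cons G x c a
      have e4 := pw_nonneg G _ hchainmid
      rw [e3, e1, e15, e2]
      linarith
    obtain ⟨q, hq, hle⟩ := ih (a ++ x :: c) hlen hc' hh' hl'
    exact ⟨q, hq, hle.trans hple⟩

lemma dist'_le_dist (h : IsUpdate G G' u v) (s t : V) :
    G'.dist s t ≤ G.dist s t := by
  apply le_sInf
  rintro x ⟨p, hp, rfl⟩
  calc G'.dist s t ≤ (G'.pw p : EReal) := dist_le_pw (isPath_mono h hp)
    _ ≤ (G.pw p : EReal) := EReal.coe_le_coe_iff.2 (h.pw_le p hp.1)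

lemma exists_sp_infix (h : IsUpdate G G' u v) (s t : V) (hs : s ∈ affS G G' t) :
    ∃ p, p ∈ G'.SP s t ∧ [u, v] <:+: p := by
  by_contra hcon
  push_neg at hcon
  have hd : G'.dist s t ≤ G.dist s t := dist'_le_dist h s t
  have key : ∀ p ∈ G'.SP s t, G.IsPath s t p ∧ G.pw p = G'.pw p := by
    intro p hp
    have hni := hcon p hp
    exact ⟨⟨h.chain_down p hni hp.1.1, hp.1.2.1, hp.1.2.2.1, hp.1.2.2.2⟩,
      (h.pw_eq p hni).symm⟩
  have hdd : G.dist s t = G'.dist s t := by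
    by_cases hne : ∃ p, G'.IsPath s t p
    · obtain ⟨p, hp, hpw⟩ := exists_sp hne
      obtain ⟨hgp, hpe⟩ := key p ⟨hp, hpw⟩
      refine le_antisymm ?_ hd
      calc G.dist s t ≤ (G.pw p : EReal) := dist_le_pw hgp
        _ = (G'.pw p : EReal) := by rw [hpe]
        _ = G'.dist s t := hpw
    · have h2 : G'.dist s t = ⊤ := dist_eq_top hne
      have h1 : G.dist s t = ⊤ := by
        apply dist_eq_top
        rintro ⟨p, hp⟩
        exact hne ⟨p, isPath_mono h hp⟩
      rw [h1, h2]
  have hsp : G.SP s t = G'.SP s t := by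
    ext p
    constructor
    · rintro ⟨hp, hpw⟩
      have hp' := isPath_mono h hp
      have hle : (G'.pw p : EReal) ≤ G'.dist s t := by
        calc (G'.pw p : EReal) ≤ (G.pw p : EReal) :=
              EReal.coe_le_coe_iff.2 (h.pw_le p hp.1)
          _ = G.dist s t := hpw
          _ = G'.dist s t := hdd
      exact ⟨hp', le_antisymm hle (dist_le_pw hp')⟩
    · rintro ⟨hp, hpw⟩
      obtain ⟨hgp, hpe⟩ := key p ⟨hp, hpw⟩
      refine ⟨hgp, ?_⟩
      calc (G.pw p : EReal) = (G'.pw p : EReal) := by rw [hpe]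
        _ = G'.dist s t := hpw
        _ = G.dist s t := hdd.symm
  rcases hs with h1 | h2
  · exact absurd hdd (ne_of_gt h1)
  · refine h2 ?_
    unfold sigma
    rw [hsp]

end Aux

/-- If `s ∈ S(t)`, then the new shortest-path distance from `s` to `t`
is realized through the updated edge: `d'(s,t) = d(s,u) + ω'(u,v) + d(v,t)`.
In particular `d(s,u) < ∞` and `d(v,t) < ∞`. -/
theorem dist'_eq_through_updated_edge (G G' : WDigraph V) (u v : V)
    (h : IsUpdate G G' u v) (s t : V) (hs : s ∈ affS G G' t) :
    G'.dist s t = G.dist s u + (G'.w u v : EReal) + G.dist v t ∧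
      G.dist s u < ⊤ ∧ G.dist v t < ⊤ := by
  obtain ⟨p, ⟨hp, hpw⟩, hinf⟩ := exists_sp_infix h s t hs
  obtain ⟨a, b, rfl⟩ := hinf
  -- the path is `(a ++ [u, v]) ++ b`; normalize it to `a ++ u :: v :: b`
  have hform : a ++ [u, v] ++ b = a ++ u :: v :: b := by simp
  rw [hform] at hp hpw
  obtain ⟨hc, hh, hl, hnd⟩ := hp
  have hsplit : a ++ u :: v :: b = (a ++ [u]) ++ (v :: b) := by simp
  -- split the chain
  have hc2 : List.Chain' G'.E ((a ++ [u]) ++ (v :: b)) := by rw [← hsplit]; exact hc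
  obtain ⟨hcpre, hcsuf, _⟩ := List.isChain_append.mp hc2
  -- split nodup
  have hnd2 : ((a ++ [u]) ++ (v :: b)).Nodup := by rw [← hsplit]; exact hnd
  rw [List.nodup_append] at hnd2
  obtain ⟨ndpre, ndsuf, _⟩ := hnd2
  -- endpoints of the prefix and suffix
  have hhpre : (a ++ [u]).head? = some s := by
    rcases a with _ | ⟨y, a⟩
    · simpa using hh
    · simpa using hh
  have hlpre : (a ++ [u]).getLast? = some u := by
    rw [List.getLast?_append_cons]; rfl
  have hltsuf : (v :: b).getLast? = some t := by
    rw [List.getLast?_append_cons, List.getLast?_cons_cons] at hl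
    exact hl
  -- the prefix and suffix avoid the updated edge
  have hpre_ni : ¬ ([u, v] <:+: (a ++ [u])) := not_infix_of_getLast ndpre hlpre
  have hsuf_ni : ¬ ([u, v] <:+: (v :: b)) := not_infix_of_head ndsuf rfl
  -- they are paths in the old graph
  have hpreP : G.IsPath s u (a ++ [u]) :=
    ⟨h.chain_down _ hpre_ni hcpre, hhpre, hlpre, ndpre⟩
  have hsufP : G.IsPath v t (v :: b) :=
    ⟨h.chain_down _ hsuf_ni hcsuf, rfl, hltsuf, ndsuf⟩
  -- shortest paths realizing d(s,u) and d(v,t)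
  obtain ⟨q1, hq1, hq1d⟩ := exists_sp ⟨_, hpreP⟩
  obtain ⟨q2, hq2, hq2d⟩ := exists_sp ⟨_, hsufP⟩
  obtain ⟨hq1c, hq1h, hq1l, hq1nd⟩ := hq1
  obtain ⟨hq2c, hq2h, hq2l, hq2nd⟩ := hq2
  have h1 : G.pw q1 ≤ G.pw (a ++ [u]) := by
    have h0 := dist_le_pw hpreP
    rw [← hq1d] at h0
    exact_mod_cast h0
  have h2 : G.pw q2 ≤ G.pw (v :: b) := by
    have h0 := dist_le_pw hsufP
    rw [← hq2d] at h0
    exact_mod_cast h0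
  -- decompose the weight of p in G'
  have hpwp : G'.pw (a ++ u :: v :: b) =
      G'.pw (a ++ [u]) + (G'.w u v + G'.pw (v :: b)) := by
    rw [pw_append_cons G' u (v :: b) a]; rfl
  have hpwpre : G'.pw (a ++ [u]) = G.pw (a ++ [u]) :=
    h.pw_eq _ hpre_ni
  have hpwsuf : G'.pw (v :: b) = G.pw (v :: b) :=
    h.pw_eq _ hsuf_ni
  -- build the walk q1 ++ q2 in G'
  have hq1ne : q1 ≠ [] := by
    intro he; rw [he] at hq1h; exact absurd hq1h (by simp)
  have hq1form : q1.dropLast ++ [u] = q1 :=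
    List.dropLast_append_getLast? u hq1l
  obtain ⟨c2, rfl⟩ : ∃ c2, q2 = v :: c2 := by
    rcases q2 with _ | ⟨y, c2⟩
    · exact absurd hq2h (by simp)
    · simp only [List.head?_cons, Option.some.injEq] at hq2h
      exact ⟨c2, by rw [hq2h]⟩
  have hWc : List.Chain' G'.E (q1 ++ v :: c2) := by
    simp only [List.Chain']; rw [List.isChain_append]
    refine ⟨h.chain_mono hq1c, h.chain_mono hq2c, fun y hy z hz => ?_⟩
    simp only [Option.mem_def] at hy hz
    rw [hq1l] at hy
    simp only [List.head?_cons, Option.some.injEq] at hy hz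
    rw [← hy, ← hz]
    exact h.edge'
  have hWh : (q1 ++ v :: c2).head? = some s := by
    rcases q1 with _ | ⟨y, q1'⟩
    · exact absurd hq1h (by simp)
    · simpa using hq1h
  have hWl : (q1 ++ v :: c2).getLast? = some t := by
    rw [List.getLast?_append_cons]; exact hq2l
  have hWpw : G'.pw (q1 ++ v :: c2) = G.pw q1 + (G'.w u v + G.pw (v :: c2)) := by
    have e0 : q1 ++ v :: c2 = q1.dropLast ++ u :: (v :: c2) := by
      rw [← hq1form]; simp
    rw [e0, pw_append_cons G' u (v :: c2) q1.dropLast, hq1form]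
    have e1 : G'.pw (u :: v :: c2) = G'.w u v + G'.pw (v :: c2) := rfl
    rw [e1, h.pw_eq q1 (not_infix_of_getLast hq1nd hq1l),
      h.pw_eq (v :: c2) (not_infix_of_head hq2nd rfl)]
  -- extract a simple path from the walk
  obtain ⟨P, hP, hPle⟩ := exists_isPath_le G' (q1 ++ v :: c2).length (q1 ++ v :: c2)
    (le_refl _) hWc hWh hWl
  -- upper bound for d'(s,t)
  have hup : G'.dist s t ≤ ((G.pw q1 + (G'.w u v + G.pw (v :: c2)) : ℝ) : EReal) := by
    calc G'.dist s t ≤ (G'.pw P : EReal) := dist_le_pw hP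
      _ ≤ _ := by exact_mod_cast hPle.trans (le_of_eq hWpw)
  -- lower bound via the decomposition of p
  have hlow : G.pw q1 + (G'.w u v + G.pw (v :: c2)) ≤ G'.pw (a ++ u :: v :: b) := by
    rw [hpwp, hpwpre, hpwsuf]
    linarith
  have hkey : G'.dist s t = ((G.pw q1 + (G'.w u v + G.pw (v :: c2)) : ℝ) : EReal) := by
    refine le_antisymm hup ?_
    rw [← hpw]
    exact_mod_cast hlow
  refine ⟨?_, ?_, ?_⟩
  · rw [hkey, ← hq1d, ← hq2d]
    push_cast
    rw [add_assoc]
  · rw [← hq1d]; exact EReal.coe_lt_top _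
  · rw [← hq2d]; exact EReal.coe_lt_top _

end WDigraph
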